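/- Let ψ = √((1+r)/2)·e₁ ⊗ e₁ + √((1−r)/2)·e₂ ⊗ e₂ with r ∈ [0,1), let v₁ = |θ₁φ₁⟩ with θ₁ ∈ (0,π), and let v₂ = F₁₂(ψ)(v₁)/‖F₁₂(ψ)(v₁)‖. Then |⟨v₂, e₁⟩|² = ((1+r)/(1+r·cosθ₁))·cos²(θ₁/2); equivalently the Bloch vector of v₂ satisfies cosθ₂ = (r + cosθ₁)/(1 + r·cosθ₁). -/

import Mathlib

open Complex
open scoped InnerProductSpace

abbrev Qubit := EuclideanSpace ℂ (Fin 2)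

noncomputable def ket (θ φ : ℝ) : Qubit :=
  WithLp.toLp 2 ![Real.cos (θ/2) * Complex.exp (-Complex.I * (φ/2)),
    Real.sin (θ/2) * Complex.exp (Complex.I * (φ/2))]

/-- The constraint function `F₁₂(ψ)` of the Schmidt-diagonal state
`ψ = √((1+r)/2) e₁⊗e₁ + √((1−r)/2) e₂⊗e₂` (in the standard basis). -/
noncomputable def F12schmidt (r : ℝ) (z : Qubit) : Qubit :=
  WithLp.toLp 2 ![(Real.sqrt ((1 + r) / 2) : ℂ) * starRingEnd ℂ (z 0),
    (Real.sqrt ((1 - r) / 2) : ℂ) * starRingEnd ℂ (z 1)]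

set_option maxHeartbeats 1000000 in
theorem collapse_stretches_bloch_sphere (r θ₁ φ₁ : ℝ) (hr : r ∈ Set.Ico (0:ℝ) 1)
    (hθ₁ : θ₁ ∈ Set.Ioo 0 Real.pi) :
    ‖⟪(‖F12schmidt r (ket θ₁ φ₁)‖⁻¹ : ℝ) • F12schmidt r (ket θ₁ φ₁),
        (EuclideanSpace.single 0 1 : Qubit)⟫_ℂ‖ ^ 2
      = (1 + r) / (1 + r * Real.cos θ₁) * Real.cos (θ₁ / 2) ^ 2 ∧
    2 * ‖⟪(‖F12schmidt r (ket θ₁ φ₁)‖⁻¹ : ℝ) • F12schmidt r (ket θ₁ φ₁),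
        (EuclideanSpace.single 0 1 : Qubit)⟫_ℂ‖ ^ 2 - 1
      = (r + Real.cos θ₁) / (1 + r * Real.cos θ₁) := by
  obtain ⟨hr0, hr1⟩ := hr
  obtain ⟨hθ0, hθπ⟩ := hθ₁
  set c := Real.cos (θ₁/2) with hc
  set s := Real.sin (θ₁/2) with hs
  have hcs : s^2 + c^2 = 1 := Real.sin_sq_add_cos_sq _
  have hcos : Real.cos θ₁ = 2*c^2 - 1 := by
    have h := Real.cos_sq (θ₁/2)
    have h2 : 2*(θ₁/2) = θ₁ := by ring
    rw [h2] at h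
    rw [← hc] at h
    linarith
  have habs : |Real.cos θ₁| ≤ 1 := Real.abs_cos_le_one θ₁
  have hD : 0 < 1 + r * Real.cos θ₁ := by
    rcases abs_le.1 habs with ⟨h1, h2⟩
    nlinarith
  have ha : 0 ≤ (1 + r)/2 := by linarith
  have hb : 0 ≤ (1 - r)/2 := by linarith
  set F := F12schmidt r (ket θ₁ φ₁) with hF
  -- abs of components
  have e0 : F 0 = (Real.sqrt ((1+r)/2) : ℂ) *
      starRingEnd ℂ ((c:ℂ) * Complex.exp (-Complex.I * (φ₁/2))) := rfl
  have e1 : F 1 = (Real.sqrt ((1-r)/2) : ℂ) *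
      starRingEnd ℂ ((s:ℂ) * Complex.exp (Complex.I * (φ₁/2))) := rfl
  have hF0 : ‖F 0‖ = Real.sqrt ((1+r)/2) * |c| := by
    rw [e0]
    simp [map_mul, Complex.norm_exp, _root_.abs_of_nonneg (Real.sqrt_nonneg _)]
  have hF1 : ‖F 1‖ = Real.sqrt ((1-r)/2) * |s| := by
    rw [e1]
    simp [map_mul, Complex.norm_exp, _root_.abs_of_nonneg (Real.sqrt_nonneg _)]
  have hF0sq : ‖F 0‖ ^ 2 = (1+r)/2 * c^2 := by
    rw [hF0, mul_pow, _root_.sq_abs, Real.sq_sqrt ha]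
  have hF1sq : ‖F 1‖ ^ 2 = (1-r)/2 * s^2 := by
    rw [hF1, mul_pow, _root_.sq_abs, Real.sq_sqrt hb]
  have hN2 : ‖F‖^2 = (1 + r * Real.cos θ₁)/2 := by
    have := EuclideanSpace.norm_eq F
    rw [Fin.sum_univ_two] at this
    rw [this, Real.sq_sqrt (by positivity)]
    rw [hF0sq, hF1sq, hcos]
    nlinarith
  have hNpos : 0 < ‖F‖ := by
    have h : (0:ℝ) < ‖F‖^2 := by rw [hN2]; linarith
    nlinarith [norm_nonneg F]
  have hinner : ⟪(‖F‖⁻¹ : ℝ) • F, (EuclideanSpace.single 0 1 : Qubit)⟫_ℂ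
      = (‖F‖⁻¹ : ℂ) * (starRingEnd ℂ) (F 0) := by
    simp [PiLp.inner_apply, Fin.sum_univ_two, EuclideanSpace.single_apply,
      Complex.real_smul, map_mul]
  have key : ‖⟪(‖F‖⁻¹ : ℝ) • F, (EuclideanSpace.single 0 1 : Qubit)⟫_ℂ‖ ^ 2
      = (1 + r) / (1 + r * Real.cos θ₁) * c ^ 2 := by
    rw [hinner, norm_mul, Complex.norm_conj, mul_pow, norm_inv, Complex.norm_real,
      norm_norm, hF0sq, inv_pow, hN2]
    field_simp
  refine ⟨key, ?_⟩
  rw [key]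
  field_simp
  nlinarith
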